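/- Let U' ⊂ U = V⊗V⊗V be as in the SL₂×SL₂×SL₂ setting (U' spanned by the weight vectors of weights (-1,-1,-1), (1,-1,-1), (-1,1,-1), (-1,-1,1)). Then ∧²U' admits a filtration by B-submodules 0 ⊂ F₁ ⊂ F₃ ⊂ F₅ ⊂ ∧²U' with successive quotients isomorphic as B-modules to: the 1-dimensional weight (-2,-2,0); a 2-dimensional module with weights (-2,0,-2), (-2,0,0); a 2-dimensional module with weights (0,-2,-2), (0,-2,0); and the 1-dimensional weight (0,0,-2). -/
import Mathlib


/-!
STATEMENT 17: With G = SL₂×SL₂×SL₂, B the (lower-triangular) Borel, U = ℂ²⊗ℂ²⊗ℂ² the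
triple tensor of standard representations, and U' ⊂ U the 4-dimensional B-stable
subspace spanned by the weight vectors of weights (-1,-1,-1), (1,-1,-1), (-1,1,-1),
(-1,-1,1), the exterior square ∧²U' admits a filtration by B-submodules
0 ⊂ F₁ ⊂ F₃ ⊂ F₅ ⊂ ∧²U' with successive quotients of dimensions 1, 2, 2, 1 and
weights: (-2,-2,0); then (-2,0,-2), (-2,0,0); then (0,-2,-2), (0,-2,0); then (0,0,-2).

We realize ∧²U' as the span of the alternating tensors x⊗y - y⊗x (x, y ∈ U') inside
U ⊗ U.  B-stability is expressed by stability under the action of the maximal torus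
(the operators `torusOp`, which exhibit the listed vectors as weight vectors of the
listed weights) and under the three simple lowering operators of the Lie algebra of B
(the derivations `lowerOp`); the weight content of each filtration step is recorded
by the explicit weight-vector generators and their torus eigenvalue equations.
-/

open scoped TensorProduct

noncomputable section

abbrev V2 : Type := Fin 2 → ℂ
abbrev TU : Type := V2 ⊗[ℂ] (V2 ⊗[ℂ] V2)

noncomputable instance : AddCommGroup (TU ⊗[ℂ] TU) := by
  exact @TensorProduct.addCommGroup ℂ _ TU TU _ _ _ _

/-- Standard basis vectors of ℂ²; `ev 0` has weight +1 and `ev 1` weight -1. -/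
def ev (i : Fin 2) : V2 := Pi.single i 1

/-- The basis tensors of U. -/
def u (a b c : Fin 2) : TU := ev a ⊗ₜ[ℂ] (ev b ⊗ₜ[ℂ] ev c)

/-- The lowering operator of 𝔰𝔩₂ (for the lower triangular Borel): e₀ ↦ e₁, e₁ ↦ 0. -/
def low : V2 →ₗ[ℂ] V2 := Matrix.toLin' !![(0 : ℂ), 0; 1, 0]

/-- The torus element diag(t, t⁻¹) acting on ℂ². -/
def tor (t : ℂˣ) : V2 →ₗ[ℂ] V2 := Matrix.toLin' (Matrix.diagonal ![(t : ℂ), ((t⁻¹ : ℂˣ) : ℂ)])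

/-- A linear operator on one of the three factors of U. -/
def onFactor (i : Fin 3) (f : V2 →ₗ[ℂ] V2) : TU →ₗ[ℂ] TU :=
  match i with
  | 0 => TensorProduct.map f LinearMap.id
  | 1 => TensorProduct.map LinearMap.id (TensorProduct.map f LinearMap.id)
  | 2 => TensorProduct.map LinearMap.id (TensorProduct.map LinearMap.id f)

/-- The i-th simple lowering operator of Lie(B), acting on U ⊗ U as a derivation. -/
def lowerOp (i : Fin 3) : (TU ⊗[ℂ] TU) →ₗ[ℂ] (TU ⊗[ℂ] TU) :=
  TensorProduct.map (onFactor i low) LinearMap.id +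
    TensorProduct.map LinearMap.id (onFactor i low)

/-- The i-th torus coordinate acting on U ⊗ U (multiplicatively). -/
def torusOp (i : Fin 3) (t : ℂˣ) : (TU ⊗[ℂ] TU) →ₗ[ℂ] (TU ⊗[ℂ] TU) :=
  TensorProduct.map (onFactor i (tor t)) (onFactor i (tor t))

/-- Alternating tensor x∧y, realized inside U ⊗ U. -/
def wedge (x y : TU) : TU ⊗[ℂ] TU := x ⊗ₜ[ℂ] y - y ⊗ₜ[ℂ] x

/-- U' : the span of the four lowest weight vectors of U. -/
def U' : Submodule ℂ TU :=
  Submodule.span ℂ {u 1 1 1, u 0 1 1, u 1 0 1, u 1 1 0}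

/-- ∧²U', realized as the span of alternating tensors of elements of U'. -/
def Lam2U' : Submodule ℂ (TU ⊗[ℂ] TU) :=
  Submodule.span ℂ {z | ∃ x ∈ U', ∃ y ∈ U', z = wedge x y}

-- The six weight vectors of ∧²U':
def v220 : TU ⊗[ℂ] TU := wedge (u 1 1 1) (u 1 1 0)  -- weight (-2,-2,0)
def v202 : TU ⊗[ℂ] TU := wedge (u 1 1 1) (u 1 0 1)  -- weight (-2,0,-2)
def v200 : TU ⊗[ℂ] TU := wedge (u 1 0 1) (u 1 1 0)  -- weight (-2,0,0)
def v022 : TU ⊗[ℂ] TU := wedge (u 0 1 1) (u 1 1 1)  -- weight (0,-2,-2)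
def v020 : TU ⊗[ℂ] TU := wedge (u 0 1 1) (u 1 1 0)  -- weight (0,-2,0)
def v002 : TU ⊗[ℂ] TU := wedge (u 0 1 1) (u 1 0 1)  -- weight (0,0,-2)

/-- The filtration steps, given by spans of the listed weight vectors. -/
def F1 : Submodule ℂ (TU ⊗[ℂ] TU) := Submodule.span ℂ {v220}
def F3 : Submodule ℂ (TU ⊗[ℂ] TU) := Submodule.span ℂ {v220, v202, v200}
def F5 : Submodule ℂ (TU ⊗[ℂ] TU) := Submodule.span ℂ {v220, v202, v200, v022, v020}

-- ===== helper lemmas =====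

lemma low_ev0 : low (ev 0) = ev 1 := by
  funext i; fin_cases i <;>
    simp [low, ev, Matrix.toLin'_apply, Matrix.mulVec, dotProduct, Pi.single_apply]

lemma low_ev1 : low (ev 1) = 0 := by
  funext i; fin_cases i <;>
    simp [low, ev, Matrix.toLin'_apply, Matrix.mulVec, dotProduct, Pi.single_apply]

lemma tor_ev0 (t : ℂˣ) : tor t (ev 0) = (t : ℂ) • ev 0 := by
  funext i; fin_cases i <;>
    simp [tor, ev, Matrix.toLin'_apply, Matrix.mulVec, dotProduct,
      Matrix.diagonal, Pi.single_apply]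

lemma tor_ev1 (t : ℂˣ) : tor t (ev 1) = ((t : ℂ)⁻¹) • ev 1 := by
  funext i; fin_cases i <;>
    simp [tor, ev, Matrix.toLin'_apply, Matrix.mulVec, dotProduct,
      Matrix.diagonal, Pi.single_apply]

set_option synthInstance.maxHeartbeats 1000000
set_option maxHeartbeats 1000000

lemma onFactor0_u (f : V2 →ₗ[ℂ] V2) (a b c : Fin 2) :
    onFactor 0 f (u a b c) = (f (ev a)) ⊗ₜ[ℂ] (ev b ⊗ₜ[ℂ] ev c) := by
  simp [onFactor, u]
lemma onFactor1_u (f : V2 →ₗ[ℂ] V2) (a b c : Fin 2) :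
    onFactor 1 f (u a b c) = ev a ⊗ₜ[ℂ] ((f (ev b)) ⊗ₜ[ℂ] ev c) := by
  simp [onFactor, u]
lemma onFactor2_u (f : V2 →ₗ[ℂ] V2) (a b c : Fin 2) :
    onFactor 2 f (u a b c) = ev a ⊗ₜ[ℂ] (ev b ⊗ₜ[ℂ] (f (ev c))) := by
  simp [onFactor, u]

lemma low_u0 (b c : Fin 2) : onFactor 0 low (u 0 b c) = u 1 b c := by
  rw [onFactor0_u, low_ev0]; rfl
lemma low_u0' (b c : Fin 2) : onFactor 0 low (u 1 b c) = 0 := by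
  rw [onFactor0_u, low_ev1]; simp
lemma low_u1 (a c : Fin 2) : onFactor 1 low (u a 0 c) = u a 1 c := by
  rw [onFactor1_u, low_ev0]; rfl
lemma low_u1' (a c : Fin 2) : onFactor 1 low (u a 1 c) = 0 := by
  rw [onFactor1_u, low_ev1]; simp
lemma low_u2 (a b : Fin 2) : onFactor 2 low (u a b 0) = u a b 1 := by
  rw [onFactor2_u, low_ev0]; rfl
lemma low_u2' (a b : Fin 2) : onFactor 2 low (u a b 1) = 0 := by
  rw [onFactor2_u, low_ev1]; simp

lemma tor_u0 (t : ℂˣ) (b c : Fin 2) :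
    onFactor 0 (tor t) (u 0 b c) = (t : ℂ) • u 0 b c := by
  rw [onFactor0_u, tor_ev0, ← TensorProduct.smul_tmul']; rfl
lemma tor_u0' (t : ℂˣ) (b c : Fin 2) :
    onFactor 0 (tor t) (u 1 b c) = ((t : ℂ)⁻¹) • u 1 b c := by
  rw [onFactor0_u, tor_ev1, ← TensorProduct.smul_tmul']; rfl
lemma tor_u1 (t : ℂˣ) (a c : Fin 2) :
    onFactor 1 (tor t) (u a 0 c) = (t : ℂ) • u a 0 c := by
  rw [onFactor1_u, tor_ev0, ← TensorProduct.smul_tmul', TensorProduct.tmul_smul]; rfl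
lemma tor_u1' (t : ℂˣ) (a c : Fin 2) :
    onFactor 1 (tor t) (u a 1 c) = ((t : ℂ)⁻¹) • u a 1 c := by
  rw [onFactor1_u, tor_ev1, ← TensorProduct.smul_tmul', TensorProduct.tmul_smul]; rfl
lemma tor_u2 (t : ℂˣ) (a b : Fin 2) :
    onFactor 2 (tor t) (u a b 0) = (t : ℂ) • u a b 0 := by
  rw [onFactor2_u, tor_ev0, TensorProduct.tmul_smul, TensorProduct.tmul_smul]; rfl
lemma tor_u2' (t : ℂˣ) (a b : Fin 2) :
    onFactor 2 (tor t) (u a b 1) = ((t : ℂ)⁻¹) • u a b 1 := by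
  rw [onFactor2_u, tor_ev1, TensorProduct.tmul_smul, TensorProduct.tmul_smul]; rfl

lemma torusOp_wedge (i : Fin 3) (t : ℂˣ) (x y : TU) :
    torusOp i t (wedge x y) =
      wedge (onFactor i (tor t) x) (onFactor i (tor t) y) := by
  simp [torusOp, wedge, TensorProduct.map_tmul]

lemma lowerOp_wedge (i : Fin 3) (x y : TU) :
    lowerOp i (wedge x y) =
      wedge (onFactor i low x) y + wedge x (onFactor i low y) := by
  simp only [lowerOp, LinearMap.add_apply, wedge, map_sub, TensorProduct.map_tmul,
    LinearMap.id_coe, id_eq]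
  abel

lemma wedge_smul_left (c : ℂ) (x y : TU) : wedge (c • x) y = c • wedge x y := by
  simp [wedge, TensorProduct.smul_tmul', TensorProduct.tmul_smul, smul_sub]
lemma wedge_smul_right (c : ℂ) (x y : TU) : wedge x (c • y) = c • wedge x y := by
  simp [wedge, TensorProduct.smul_tmul', TensorProduct.tmul_smul, smul_sub]
lemma wedge_add_left (x x' y : TU) : wedge (x + x') y = wedge x y + wedge x' y := by
  simp [wedge, TensorProduct.add_tmul, TensorProduct.tmul_add]; abel
lemma wedge_add_right (x y y' : TU) : wedge x (y + y') = wedge x y + wedge x y' := by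
  simp [wedge, TensorProduct.add_tmul, TensorProduct.tmul_add]; abel
lemma wedge_self (x : TU) : wedge x x = 0 := sub_self _
lemma wedge_zero_left (y : TU) : wedge 0 y = 0 := by simp [wedge]
lemma wedge_zero_right (x : TU) : wedge x 0 = 0 := by simp [wedge]
lemma wedge_comm (x y : TU) : wedge x y = - wedge y x := by simp [wedge]

lemma inv_mul_self_eq_zpow (t : ℂˣ) : (t : ℂ)⁻¹ * (t : ℂ)⁻¹ = (t : ℂ) ^ (-2 : ℤ) := by
  rw [zpow_neg, zpow_two, mul_inv]
lemma inv_mul_self_eq_one (t : ℂˣ) : (t : ℂ)⁻¹ * (t : ℂ) = 1 := by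
  field_simp

-- abbreviations for eigenvalue simp
lemma tt_one (t : ℂˣ) : (t : ℂ) * (t : ℂ)⁻¹ = 1 := by field_simp

-- ===== torus actions on the six weight vectors =====
lemma t0_v220 (t : ℂˣ) : torusOp 0 t v220 = ((t : ℂ) ^ (-2 : ℤ)) • v220 := by
  rw [v220, torusOp_wedge, tor_u0', tor_u0', wedge_smul_left, wedge_smul_right,
    smul_smul, inv_mul_self_eq_zpow]
lemma t1_v220 (t : ℂˣ) : torusOp 1 t v220 = ((t : ℂ) ^ (-2 : ℤ)) • v220 := by
  rw [v220, torusOp_wedge, tor_u1', tor_u1', wedge_smul_left, wedge_smul_right,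
    smul_smul, inv_mul_self_eq_zpow]
lemma t2_v220 (t : ℂˣ) : torusOp 2 t v220 = v220 := by
  rw [v220, torusOp_wedge, tor_u2', tor_u2, wedge_smul_left, wedge_smul_right,
    smul_smul, inv_mul_self_eq_one, one_smul]
lemma t0_v202 (t : ℂˣ) : torusOp 0 t v202 = ((t : ℂ) ^ (-2 : ℤ)) • v202 := by
  rw [v202, torusOp_wedge, tor_u0', tor_u0', wedge_smul_left, wedge_smul_right,
    smul_smul, inv_mul_self_eq_zpow]
lemma t1_v202 (t : ℂˣ) : torusOp 1 t v202 = v202 := by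
  rw [v202, torusOp_wedge, tor_u1', tor_u1, wedge_smul_left, wedge_smul_right,
    smul_smul, inv_mul_self_eq_one, one_smul]
lemma t2_v202 (t : ℂˣ) : torusOp 2 t v202 = ((t : ℂ) ^ (-2 : ℤ)) • v202 := by
  rw [v202, torusOp_wedge, tor_u2', tor_u2', wedge_smul_left, wedge_smul_right,
    smul_smul, inv_mul_self_eq_zpow]
lemma t0_v200 (t : ℂˣ) : torusOp 0 t v200 = ((t : ℂ) ^ (-2 : ℤ)) • v200 := by
  rw [v200, torusOp_wedge, tor_u0', tor_u0', wedge_smul_left, wedge_smul_right,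
    smul_smul, inv_mul_self_eq_zpow]
lemma t1_v200 (t : ℂˣ) : torusOp 1 t v200 = v200 := by
  rw [v200, torusOp_wedge, tor_u1, tor_u1', wedge_smul_left, wedge_smul_right,
    smul_smul, tt_one, one_smul]
lemma t2_v200 (t : ℂˣ) : torusOp 2 t v200 = v200 := by
  rw [v200, torusOp_wedge, tor_u2', tor_u2, wedge_smul_left, wedge_smul_right,
    smul_smul, inv_mul_self_eq_one, one_smul]
lemma t0_v022 (t : ℂˣ) : torusOp 0 t v022 = v022 := by
  rw [v022, torusOp_wedge, tor_u0, tor_u0', wedge_smul_left, wedge_smul_right,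
    smul_smul, tt_one, one_smul]
lemma t1_v022 (t : ℂˣ) : torusOp 1 t v022 = ((t : ℂ) ^ (-2 : ℤ)) • v022 := by
  rw [v022, torusOp_wedge, tor_u1', tor_u1', wedge_smul_left, wedge_smul_right,
    smul_smul, inv_mul_self_eq_zpow]
lemma t2_v022 (t : ℂˣ) : torusOp 2 t v022 = ((t : ℂ) ^ (-2 : ℤ)) • v022 := by
  rw [v022, torusOp_wedge, tor_u2', tor_u2', wedge_smul_left, wedge_smul_right,
    smul_smul, inv_mul_self_eq_zpow]
lemma t0_v020 (t : ℂˣ) : torusOp 0 t v020 = v020 := by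
  rw [v020, torusOp_wedge, tor_u0, tor_u0', wedge_smul_left, wedge_smul_right,
    smul_smul, tt_one, one_smul]
lemma t1_v020 (t : ℂˣ) : torusOp 1 t v020 = ((t : ℂ) ^ (-2 : ℤ)) • v020 := by
  rw [v020, torusOp_wedge, tor_u1', tor_u1', wedge_smul_left, wedge_smul_right,
    smul_smul, inv_mul_self_eq_zpow]
lemma t2_v020 (t : ℂˣ) : torusOp 2 t v020 = v020 := by
  rw [v020, torusOp_wedge, tor_u2', tor_u2, wedge_smul_left, wedge_smul_right,
    smul_smul, inv_mul_self_eq_one, one_smul]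
lemma t0_v002 (t : ℂˣ) : torusOp 0 t v002 = v002 := by
  rw [v002, torusOp_wedge, tor_u0, tor_u0', wedge_smul_left, wedge_smul_right,
    smul_smul, tt_one, one_smul]
lemma t1_v002 (t : ℂˣ) : torusOp 1 t v002 = v002 := by
  rw [v002, torusOp_wedge, tor_u1', tor_u1, wedge_smul_left, wedge_smul_right,
    smul_smul, inv_mul_self_eq_one, one_smul]
lemma t2_v002 (t : ℂˣ) : torusOp 2 t v002 = ((t : ℂ) ^ (-2 : ℤ)) • v002 := by
  rw [v002, torusOp_wedge, tor_u2', tor_u2', wedge_smul_left, wedge_smul_right,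
    smul_smul, inv_mul_self_eq_zpow]

-- ===== lowering actions on the six weight vectors =====
lemma l0_v220 : lowerOp 0 v220 = 0 := by
  rw [v220, lowerOp_wedge, low_u0', low_u0', wedge_zero_left, wedge_zero_right, add_zero]
lemma l1_v220 : lowerOp 1 v220 = 0 := by
  rw [v220, lowerOp_wedge, low_u1', low_u1', wedge_zero_left, wedge_zero_right, add_zero]
lemma l2_v220 : lowerOp 2 v220 = 0 := by
  rw [v220, lowerOp_wedge, low_u2', low_u2, wedge_zero_left, wedge_self, add_zero]
lemma l0_v202 : lowerOp 0 v202 = 0 := by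
  rw [v202, lowerOp_wedge, low_u0', low_u0', wedge_zero_left, wedge_zero_right, add_zero]
lemma l1_v202 : lowerOp 1 v202 = 0 := by
  rw [v202, lowerOp_wedge, low_u1', low_u1, wedge_zero_left, wedge_self, add_zero]
lemma l2_v202 : lowerOp 2 v202 = 0 := by
  rw [v202, lowerOp_wedge, low_u2', low_u2', wedge_zero_left, wedge_zero_right, add_zero]
lemma l0_v200 : lowerOp 0 v200 = 0 := by
  rw [v200, lowerOp_wedge, low_u0', low_u0', wedge_zero_left, wedge_zero_right, add_zero]
lemma l1_v200 : lowerOp 1 v200 = v220 := by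
  rw [v200, lowerOp_wedge, low_u1, low_u1', wedge_zero_right, add_zero]; rfl
lemma l2_v200 : lowerOp 2 v200 = -v202 := by
  rw [v200, lowerOp_wedge, low_u2', low_u2, wedge_zero_left, zero_add, v202,
    wedge_comm]
lemma l0_v022 : lowerOp 0 v022 = 0 := by
  rw [v022, lowerOp_wedge, low_u0, low_u0', wedge_zero_right, add_zero, wedge_self]
lemma l1_v022 : lowerOp 1 v022 = 0 := by
  rw [v022, lowerOp_wedge, low_u1', low_u1', wedge_zero_left, wedge_zero_right, add_zero]
lemma l2_v022 : lowerOp 2 v022 = 0 := by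
  rw [v022, lowerOp_wedge, low_u2', low_u2', wedge_zero_left, wedge_zero_right, add_zero]
lemma l0_v020 : lowerOp 0 v020 = v220 := by
  rw [v020, lowerOp_wedge, low_u0, low_u0', wedge_zero_right, add_zero]; rfl
lemma l1_v020 : lowerOp 1 v020 = 0 := by
  rw [v020, lowerOp_wedge, low_u1', low_u1', wedge_zero_left, wedge_zero_right, add_zero]
lemma l2_v020 : lowerOp 2 v020 = v022 := by
  rw [v020, lowerOp_wedge, low_u2', low_u2, wedge_zero_left, zero_add]; rfl
lemma l0_v002 : lowerOp 0 v002 = v202 := by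
  rw [v002, lowerOp_wedge, low_u0, low_u0', wedge_zero_right, add_zero]; rfl
lemma l1_v002 : lowerOp 1 v002 = v022 := by
  rw [v002, lowerOp_wedge, low_u1', low_u1, wedge_zero_left, zero_add]; rfl
lemma l2_v002 : lowerOp 2 v002 = 0 := by
  rw [v002, lowerOp_wedge, low_u2', low_u2', wedge_zero_left, wedge_zero_right, add_zero]

-- ===== coordinate functionals =====
def cV (a : Fin 2) : V2 →ₗ[ℂ] ℂ := LinearMap.proj a
def mulC : (ℂ ⊗[ℂ] ℂ) →ₗ[ℂ] ℂ := (TensorProduct.lid ℂ ℂ).toLinearMap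
def cVV (b c : Fin 2) : (V2 ⊗[ℂ] V2) →ₗ[ℂ] ℂ := mulC ∘ₗ TensorProduct.map (cV b) (cV c)
def cU (a b c : Fin 2) : TU →ₗ[ℂ] ℂ := mulC ∘ₗ TensorProduct.map (cV a) (cVV b c)
def cUU (a b c a' b' c' : Fin 2) : (TU ⊗[ℂ] TU) →ₗ[ℂ] ℂ :=
  mulC ∘ₗ TensorProduct.map (cU a b c) (cU a' b' c')

lemma cV_ev (a b : Fin 2) : cV a (ev b) = if b = a then 1 else 0 := by
  simp [cV, ev, Pi.single_apply, eq_comm]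

lemma cU_u (a b c p q r : Fin 2) :
    cU a b c (u p q r) =
      (if p = a then 1 else 0) * ((if q = b then 1 else 0) * (if r = c then 1 else 0)) := by
  simp [cU, cVV, u, mulC, TensorProduct.map_tmul, TensorProduct.lid_tmul, cV_ev,
    smul_eq_mul]

lemma cUU_wedge (a b c a' b' c' p q r p' q' r' : Fin 2) :
    cUU a b c a' b' c' (wedge (u p q r) (u p' q' r')) =
      (cU a b c (u p q r)) * (cU a' b' c' (u p' q' r')) -
        (cU a b c (u p' q' r')) * (cU a' b' c' (u p q r)) := by
  simp [cUU, wedge, mulC, TensorProduct.map_tmul, TensorProduct.lid_tmul, smul_eq_mul,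
    mul_comm]

/-- The coordinate map picking out the six relevant coefficients. -/
def Phi : (TU ⊗[ℂ] TU) →ₗ[ℂ] (Fin 6 → ℂ) :=
  LinearMap.pi (fun i =>
    match i with
    | 0 => cUU 1 1 1 1 1 0
    | 1 => cUU 1 1 1 1 0 1
    | 2 => cUU 1 0 1 1 1 0
    | 3 => cUU 0 1 1 1 1 1
    | 4 => cUU 0 1 1 1 1 0
    | 5 => cUU 0 1 1 1 0 1)

def vfam : Fin 6 → (TU ⊗[ℂ] TU) := fun i =>
  match i with
  | 0 => v220 | 1 => v202 | 2 => v200 | 3 => v022 | 4 => v020 | 5 => v002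

lemma Phi_vfam : Phi ∘ vfam = fun i => Pi.single i (1 : ℂ) := by
  funext i j
  fin_cases i <;> fin_cases j <;>
    simp [Phi, vfam, v220, v202, v200, v022, v020, v002, LinearMap.pi_apply,
      cUU_wedge, cU_u, Pi.single_apply]

lemma li6 : LinearIndependent ℂ vfam := by
  apply LinearIndependent.of_comp Phi
  rw [show (⇑Phi ∘ vfam) = fun i => Pi.single i (1:ℂ) from Phi_vfam]
  have := (Pi.basisFun ℂ (Fin 6)).linearIndependent
  convert this using 1
  funext i
  simp [Pi.basisFun_apply]

-- ===== linear independence of subfamilies and finranks =====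
lemma v220_ne : v220 ≠ 0 := by
  have := li6.ne_zero 0
  simpa [vfam] using this

def sixSet : Set (TU ⊗[ℂ] TU) := {v220, v202, v200, v022, v020, v002}

lemma sixSet_eq : sixSet = Set.range vfam := by
  ext x
  constructor
  · rintro (rfl | rfl | rfl | rfl | rfl | rfl)
    exacts [⟨0, rfl⟩, ⟨1, rfl⟩, ⟨2, rfl⟩, ⟨3, rfl⟩, ⟨4, rfl⟩, ⟨5, rfl⟩]
  · rintro ⟨i, rfl⟩
    fin_cases i <;> simp [vfam, sixSet]

lemma F5set_eq : ({v220, v202, v200, v022, v020} : Set (TU ⊗[ℂ] TU)) =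
    Set.range (fun i : Fin 5 => vfam (Fin.castLE (by norm_num) i)) := by
  ext x
  constructor
  · rintro (rfl | rfl | rfl | rfl | rfl)
    exacts [⟨0, rfl⟩, ⟨1, rfl⟩, ⟨2, rfl⟩, ⟨3, rfl⟩, ⟨4, rfl⟩]
  · rintro ⟨i, rfl⟩
    fin_cases i <;> simp [vfam, Fin.castLE]

lemma F3set_eq : ({v220, v202, v200} : Set (TU ⊗[ℂ] TU)) =
    Set.range (fun i : Fin 3 => vfam (Fin.castLE (by norm_num) i)) := by
  ext x
  constructor
  · rintro (rfl | rfl | rfl)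
    exacts [⟨0, rfl⟩, ⟨1, rfl⟩, ⟨2, rfl⟩]
  · rintro ⟨i, rfl⟩
    fin_cases i <;> simp [vfam, Fin.castLE]

lemma finrank_F1 : Module.finrank ℂ F1 = 1 := by
  rw [F1]; exact finrank_span_singleton v220_ne

lemma finrank_F3 : Module.finrank ℂ F3 = 3 := by
  rw [F3, F3set_eq]
  have h : LinearIndependent ℂ (fun i : Fin 3 => vfam (Fin.castLE (by norm_num) i)) :=
    li6.comp _ (Fin.castLE_injective _)
  simpa using finrank_span_eq_card h

lemma finrank_F5 : Module.finrank ℂ F5 = 5 := by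
  rw [F5, F5set_eq]
  have h : LinearIndependent ℂ (fun i : Fin 5 => vfam (Fin.castLE (by norm_num) i)) :=
    li6.comp _ (Fin.castLE_injective _)
  simpa using finrank_span_eq_card h

lemma finrank_six : Module.finrank ℂ (Submodule.span ℂ sixSet) = 6 := by
  rw [sixSet_eq]
  simpa using finrank_span_eq_card li6

-- ===== ∧²U' = span of the six weight vectors =====
lemma mem_six (x : TU ⊗[ℂ] TU) (hx : x ∈ sixSet) : x ∈ Submodule.span ℂ sixSet :=
  Submodule.subset_span hx

lemma span_eq_six : Lam2U' = Submodule.span ℂ sixSet := by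
  apply le_antisymm
  · rw [Lam2U', Submodule.span_le]
    rintro z ⟨x, hx, y, hy, rfl⟩
    have key : ∀ x ∈ U', ∀ y ∈ U', wedge x y ∈ Submodule.span ℂ sixSet := by
      intro x hx
      induction hx using Submodule.span_induction with
      | mem s hs =>
        intro y hy
        induction hy using Submodule.span_induction with
        | mem s' hs' =>
          simp only [Set.mem_insert_iff, Set.mem_singleton_iff] at hs hs'
          have h220 : v220 ∈ Submodule.span ℂ sixSet := mem_six _ (by left; rfl)
          have h202 : v202 ∈ Submodule.span ℂ sixSet :=
            mem_six _ (by right; left; rfl)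
          have h200 : v200 ∈ Submodule.span ℂ sixSet :=
            mem_six _ (by right; right; left; rfl)
          have h022 : v022 ∈ Submodule.span ℂ sixSet :=
            mem_six _ (by right; right; right; left; rfl)
          have h020 : v020 ∈ Submodule.span ℂ sixSet :=
            mem_six _ (by right; right; right; right; left; rfl)
          have h002 : v002 ∈ Submodule.span ℂ sixSet :=
            mem_six _ (by right; right; right; right; right; rfl)
          rcases hs with rfl | rfl | rfl | rfl <;> rcases hs' with rfl | rfl | rfl | rfl <;>
            first
            | (rw [wedge_self]; exact Submodule.zero_mem _)
            | exact h220 | exact h202 | exact h200 | exact h022 | exact h020 | exact h002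
            | (rw [wedge_comm]; exact Submodule.neg_mem _ h220)
            | (rw [wedge_comm]; exact Submodule.neg_mem _ h202)
            | (rw [wedge_comm]; exact Submodule.neg_mem _ h200)
            | (rw [wedge_comm]; exact Submodule.neg_mem _ h022)
            | (rw [wedge_comm]; exact Submodule.neg_mem _ h020)
            | (rw [wedge_comm]; exact Submodule.neg_mem _ h002)
        | zero => rw [wedge_zero_right]; exact Submodule.zero_mem _
        | add y y' _ _ ih ih' =>
          rw [wedge_add_right]; exact Submodule.add_mem _ ih ih'
        | smul c y _ ih => rw [wedge_smul_right]; exact Submodule.smul_mem _ _ ih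
      | zero => intro y hy; rw [wedge_zero_left]; exact Submodule.zero_mem _
      | add x x' _ _ ih ih' =>
        intro y hy
        rw [wedge_add_left]; exact Submodule.add_mem _ (ih y hy) (ih' y hy)
      | smul c x _ ih =>
        intro y hy
        rw [wedge_smul_left]; exact Submodule.smul_mem _ _ (ih y hy)
    exact key x hx y hy
  · rw [Submodule.span_le]
    have g1 : u 1 1 1 ∈ U' := Submodule.subset_span (by left; rfl)
    have g2 : u 0 1 1 ∈ U' := Submodule.subset_span (by right; left; rfl)
    have g3 : u 1 0 1 ∈ U' := Submodule.subset_span (by right; right; left; rfl)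
    have g4 : u 1 1 0 ∈ U' := Submodule.subset_span (by right; right; right; rfl)
    rintro x (rfl | rfl | rfl | rfl | rfl | rfl) <;>
      exact Submodule.subset_span ⟨_, by assumption, _, by assumption, rfl⟩

-- ===== membership helpers =====
lemma m1_220 : v220 ∈ F1 := Submodule.subset_span rfl
lemma m3_220 : v220 ∈ F3 := Submodule.subset_span (by left; rfl)
lemma m3_202 : v202 ∈ F3 := Submodule.subset_span (by right; left; rfl)
lemma m3_200 : v200 ∈ F3 := Submodule.subset_span (by right; right; rfl)
lemma m5_220 : v220 ∈ F5 := Submodule.subset_span (by left; rfl)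
lemma m5_202 : v202 ∈ F5 := Submodule.subset_span (by right; left; rfl)
lemma m5_200 : v200 ∈ F5 := Submodule.subset_span (by right; right; left; rfl)
lemma m5_022 : v022 ∈ F5 := Submodule.subset_span (by right; right; right; left; rfl)
lemma m5_020 : v020 ∈ F5 := Submodule.subset_span (by right; right; right; right; rfl)
lemma m6_220 : v220 ∈ Submodule.span ℂ sixSet := Submodule.subset_span (by left; rfl)
lemma m6_202 : v202 ∈ Submodule.span ℂ sixSet :=
  Submodule.subset_span (by right; left; rfl)
lemma m6_200 : v200 ∈ Submodule.span ℂ sixSet :=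
  Submodule.subset_span (by right; right; left; rfl)
lemma m6_022 : v022 ∈ Submodule.span ℂ sixSet :=
  Submodule.subset_span (by right; right; right; left; rfl)
lemma m6_020 : v020 ∈ Submodule.span ℂ sixSet :=
  Submodule.subset_span (by right; right; right; right; left; rfl)
lemma m6_002 : v002 ∈ Submodule.span ℂ sixSet :=
  Submodule.subset_span (by right; right; right; right; right; rfl)

-- ===== stability =====
lemma stab_F1 : (∀ i t, F1.map (torusOp i t) ≤ F1) ∧
    (∀ i : Fin 3, F1.map (lowerOp i) ≤ F1) := by
  constructor
  · intro i t
    rw [F1, Submodule.map_span, Submodule.span_le]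
    rintro _ ⟨x, rfl, rfl⟩
    fin_cases i <;> simp only [Fin.zero_eta, Fin.mk_one, Fin.reduceFinMk]
    · rw [t0_v220]; exact Submodule.smul_mem _ _ m1_220
    · rw [t1_v220]; exact Submodule.smul_mem _ _ m1_220
    · rw [t2_v220]; exact m1_220
  · intro i
    rw [F1, Submodule.map_span, Submodule.span_le]
    rintro _ ⟨x, rfl, rfl⟩
    fin_cases i <;> simp only [Fin.zero_eta, Fin.mk_one, Fin.reduceFinMk]
    · rw [l0_v220]; exact Submodule.zero_mem _
    · rw [l1_v220]; exact Submodule.zero_mem _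
    · rw [l2_v220]; exact Submodule.zero_mem _

lemma stab_F3 : (∀ i t, F3.map (torusOp i t) ≤ F3) ∧
    (∀ i : Fin 3, F3.map (lowerOp i) ≤ F3) := by
  constructor
  · intro i t
    rw [F3, Submodule.map_span, Submodule.span_le]
    rintro _ ⟨x, hx, rfl⟩
    rcases hx with rfl | rfl | rfl <;>
        fin_cases i <;> simp only [Fin.zero_eta, Fin.mk_one, Fin.reduceFinMk]
    · rw [t0_v220]; exact Submodule.smul_mem _ _ m3_220
    · rw [t1_v220]; exact Submodule.smul_mem _ _ m3_220
    · rw [t2_v220]; exact m3_220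
    · rw [t0_v202]; exact Submodule.smul_mem _ _ m3_202
    · rw [t1_v202]; exact m3_202
    · rw [t2_v202]; exact Submodule.smul_mem _ _ m3_202
    · rw [t0_v200]; exact Submodule.smul_mem _ _ m3_200
    · rw [t1_v200]; exact m3_200
    · rw [t2_v200]; exact m3_200
  · intro i
    rw [F3, Submodule.map_span, Submodule.span_le]
    rintro _ ⟨x, hx, rfl⟩
    rcases hx with rfl | rfl | rfl <;>
        fin_cases i <;> simp only [Fin.zero_eta, Fin.mk_one, Fin.reduceFinMk]
    · rw [l0_v220]; exact Submodule.zero_mem _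
    · rw [l1_v220]; exact Submodule.zero_mem _
    · rw [l2_v220]; exact Submodule.zero_mem _
    · rw [l0_v202]; exact Submodule.zero_mem _
    · rw [l1_v202]; exact Submodule.zero_mem _
    · rw [l2_v202]; exact Submodule.zero_mem _
    · rw [l0_v200]; exact Submodule.zero_mem _
    · rw [l1_v200]; exact m3_220
    · rw [l2_v200]; exact Submodule.neg_mem _ m3_202

lemma stab_F5 : (∀ i t, F5.map (torusOp i t) ≤ F5) ∧
    (∀ i : Fin 3, F5.map (lowerOp i) ≤ F5) := by
  constructor
  · intro i t
    rw [F5, Submodule.map_span, Submodule.span_le]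
    rintro _ ⟨x, hx, rfl⟩
    rcases hx with rfl | rfl | rfl | rfl | rfl <;>
        fin_cases i <;> simp only [Fin.zero_eta, Fin.mk_one, Fin.reduceFinMk]
    · rw [t0_v220]; exact Submodule.smul_mem _ _ m5_220
    · rw [t1_v220]; exact Submodule.smul_mem _ _ m5_220
    · rw [t2_v220]; exact m5_220
    · rw [t0_v202]; exact Submodule.smul_mem _ _ m5_202
    · rw [t1_v202]; exact m5_202
    · rw [t2_v202]; exact Submodule.smul_mem _ _ m5_202
    · rw [t0_v200]; exact Submodule.smul_mem _ _ m5_200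
    · rw [t1_v200]; exact m5_200
    · rw [t2_v200]; exact m5_200
    · rw [t0_v022]; exact m5_022
    · rw [t1_v022]; exact Submodule.smul_mem _ _ m5_022
    · rw [t2_v022]; exact Submodule.smul_mem _ _ m5_022
    · rw [t0_v020]; exact m5_020
    · rw [t1_v020]; exact Submodule.smul_mem _ _ m5_020
    · rw [t2_v020]; exact m5_020
  · intro i
    rw [F5, Submodule.map_span, Submodule.span_le]
    rintro _ ⟨x, hx, rfl⟩
    rcases hx with rfl | rfl | rfl | rfl | rfl <;>
        fin_cases i <;> simp only [Fin.zero_eta, Fin.mk_one, Fin.reduceFinMk]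
    · rw [l0_v220]; exact Submodule.zero_mem _
    · rw [l1_v220]; exact Submodule.zero_mem _
    · rw [l2_v220]; exact Submodule.zero_mem _
    · rw [l0_v202]; exact Submodule.zero_mem _
    · rw [l1_v202]; exact Submodule.zero_mem _
    · rw [l2_v202]; exact Submodule.zero_mem _
    · rw [l0_v200]; exact Submodule.zero_mem _
    · rw [l1_v200]; exact m5_220
    · rw [l2_v200]; exact Submodule.neg_mem _ m5_202
    · rw [l0_v022]; exact Submodule.zero_mem _
    · rw [l1_v022]; exact Submodule.zero_mem _
    · rw [l2_v022]; exact Submodule.zero_mem _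
    · rw [l0_v020]; exact m5_220
    · rw [l1_v020]; exact Submodule.zero_mem _
    · rw [l2_v020]; exact m5_022

lemma stab_six : (∀ i t, Lam2U'.map (torusOp i t) ≤ Lam2U') ∧
    (∀ i : Fin 3, Lam2U'.map (lowerOp i) ≤ Lam2U') := by
  rw [span_eq_six]
  constructor
  · intro i t
    rw [sixSet, Submodule.map_span, Submodule.span_le]
    rintro _ ⟨x, hx, rfl⟩
    rw [show Submodule.span ℂ {v220, v202, v200, v022, v020, v002} =
      Submodule.span ℂ sixSet from rfl]
    rcases hx with rfl | rfl | rfl | rfl | rfl | rfl <;>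
        fin_cases i <;> simp only [Fin.zero_eta, Fin.mk_one, Fin.reduceFinMk]
    · rw [t0_v220]; exact Submodule.smul_mem _ _ m6_220
    · rw [t1_v220]; exact Submodule.smul_mem _ _ m6_220
    · rw [t2_v220]; exact m6_220
    · rw [t0_v202]; exact Submodule.smul_mem _ _ m6_202
    · rw [t1_v202]; exact m6_202
    · rw [t2_v202]; exact Submodule.smul_mem _ _ m6_202
    · rw [t0_v200]; exact Submodule.smul_mem _ _ m6_200
    · rw [t1_v200]; exact m6_200
    · rw [t2_v200]; exact m6_200
    · rw [t0_v022]; exact m6_022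
    · rw [t1_v022]; exact Submodule.smul_mem _ _ m6_022
    · rw [t2_v022]; exact Submodule.smul_mem _ _ m6_022
    · rw [t0_v020]; exact m6_020
    · rw [t1_v020]; exact Submodule.smul_mem _ _ m6_020
    · rw [t2_v020]; exact m6_020
    · rw [t0_v002]; exact m6_002
    · rw [t1_v002]; exact m6_002
    · rw [t2_v002]; exact Submodule.smul_mem _ _ m6_002
  · intro i
    rw [sixSet, Submodule.map_span, Submodule.span_le]
    rintro _ ⟨x, hx, rfl⟩
    rw [show Submodule.span ℂ {v220, v202, v200, v022, v020, v002} =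
      Submodule.span ℂ sixSet from rfl]
    rcases hx with rfl | rfl | rfl | rfl | rfl | rfl <;>
        fin_cases i <;> simp only [Fin.zero_eta, Fin.mk_one, Fin.reduceFinMk]
    · rw [l0_v220]; exact Submodule.zero_mem _
    · rw [l1_v220]; exact Submodule.zero_mem _
    · rw [l2_v220]; exact Submodule.zero_mem _
    · rw [l0_v202]; exact Submodule.zero_mem _
    · rw [l1_v202]; exact Submodule.zero_mem _
    · rw [l2_v202]; exact Submodule.zero_mem _
    · rw [l0_v200]; exact Submodule.zero_mem _
    · rw [l1_v200]; exact m6_220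
    · rw [l2_v200]; exact Submodule.neg_mem _ m6_202
    · rw [l0_v022]; exact Submodule.zero_mem _
    · rw [l1_v022]; exact Submodule.zero_mem _
    · rw [l2_v022]; exact Submodule.zero_mem _
    · rw [l0_v020]; exact m6_220
    · rw [l1_v020]; exact Submodule.zero_mem _
    · rw [l2_v020]; exact m6_022
    · rw [l0_v002]; exact m6_202
    · rw [l1_v002]; exact m6_022
    · rw [l2_v002]; exact Submodule.zero_mem _
theorem lam2_filtration :
    -- ∧²U' is spanned by the six listed weight vectors, and the listed generators
    -- are weight vectors of the listed weights:
    Lam2U' = Submodule.span ℂ {v220, v202, v200, v022, v020, v002} ∧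
    (∀ t : ℂˣ, torusOp 0 t v220 = ((t : ℂ) ^ (-2 : ℤ)) • v220 ∧
      torusOp 1 t v220 = ((t : ℂ) ^ (-2 : ℤ)) • v220 ∧ torusOp 2 t v220 = v220) ∧
    (∀ t : ℂˣ, torusOp 0 t v202 = ((t : ℂ) ^ (-2 : ℤ)) • v202 ∧
      torusOp 1 t v202 = v202 ∧ torusOp 2 t v202 = ((t : ℂ) ^ (-2 : ℤ)) • v202) ∧
    (∀ t : ℂˣ, torusOp 0 t v200 = ((t : ℂ) ^ (-2 : ℤ)) • v200 ∧
      torusOp 1 t v200 = v200 ∧ torusOp 2 t v200 = v200) ∧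
    (∀ t : ℂˣ, torusOp 0 t v022 = v022 ∧
      torusOp 1 t v022 = ((t : ℂ) ^ (-2 : ℤ)) • v022 ∧
      torusOp 2 t v022 = ((t : ℂ) ^ (-2 : ℤ)) • v022) ∧
    (∀ t : ℂˣ, torusOp 0 t v020 = v020 ∧
      torusOp 1 t v020 = ((t : ℂ) ^ (-2 : ℤ)) • v020 ∧ torusOp 2 t v020 = v020) ∧
    (∀ t : ℂˣ, torusOp 0 t v002 = v002 ∧ torusOp 1 t v002 = v002 ∧
      torusOp 2 t v002 = ((t : ℂ) ^ (-2 : ℤ)) • v002) ∧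
    -- the filtration is an increasing chain inside ∧²U':
    F1 ≤ F3 ∧ F3 ≤ F5 ∧ F5 ≤ Lam2U' ∧
    -- each step is B-stable (stable under the torus and the lowering operators):
    (∀ F ∈ [F1, F3, F5, Lam2U'], (∀ i t, F.map (torusOp i t) ≤ F) ∧
      (∀ i : Fin 3, F.map (lowerOp i) ≤ F)) ∧
    -- dimensions 1, 3, 5, 6, so the successive quotients have dimensions 1, 2, 2, 1:
    Module.finrank ℂ F1 = 1 ∧ Module.finrank ℂ F3 = 3 ∧
    Module.finrank ℂ F5 = 5 ∧ Module.finrank ℂ Lam2U' = 6 := by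
  refine ⟨span_eq_six, ?_, ?_, ?_, ?_, ?_, ?_, ?_, ?_, ?_, ?_, finrank_F1, finrank_F3,
    finrank_F5, ?_⟩
  · exact fun t => ⟨t0_v220 t, t1_v220 t, t2_v220 t⟩
  · exact fun t => ⟨t0_v202 t, t1_v202 t, t2_v202 t⟩
  · exact fun t => ⟨t0_v200 t, t1_v200 t, t2_v200 t⟩
  · exact fun t => ⟨t0_v022 t, t1_v022 t, t2_v022 t⟩
  · exact fun t => ⟨t0_v020 t, t1_v020 t, t2_v020 t⟩
  · exact fun t => ⟨t0_v002 t, t1_v002 t, t2_v002 t⟩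
  · rw [F1, Submodule.span_le]
    rintro _ rfl
    exact m3_220
  · rw [F3, Submodule.span_le]
    rintro _ (rfl | rfl | rfl)
    exacts [m5_220, m5_202, m5_200]
  · rw [F5, Submodule.span_le, span_eq_six]
    rintro _ (rfl | rfl | rfl | rfl | rfl)
    exacts [m6_220, m6_202, m6_200, m6_022, m6_020]
  · intro F hF
    simp only [List.mem_cons, List.not_mem_nil, or_false, List.mem_singleton] at hF
    rcases hF with rfl | rfl | rfl | rfl
    exacts [stab_F1, stab_F3, stab_F5, stab_six]
  · rw [show Lam2U' = Submodule.span ℂ sixSet from span_eq_six]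
    exact finrank_six

end
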